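/- Let A be a real m×d matrix and B a real d×m matrix satisfying the four Moore–Penrose equations A B A = A, B A B = B, (A B)ᵀ = A B, and (B A)ᵀ = B A. Fix r > 0, y ∈ ℝ^m and D ∈ ℝ^d. For each σ > 0 let x*(σ) denote the unique minimizer over x ∈ ℝ^d of ‖y − A x‖² + (σ²/r²)·‖x − D‖². Then x*(σ) = D + r² Aᵀ (σ² I_m + r² A Aᵀ)⁻¹ (y − A D) for every σ > 0, and x*(σ) converges, as σ → 0⁺, to B y + (I_d − B A) D. (DDNM as the vanishing-noise limit of the isotropic-covariance proximal/posterior-mean solution.) -/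

import Mathlib

open Matrix Filter

lemma aux_isUnit {n k : ℕ} (C : Matrix (Fin n) (Fin k) ℝ) (σ r : ℝ) (hσ : 0 < σ) (hr : 0 < r) :
    IsUnit (σ ^ 2 • (1 : Matrix (Fin n) (Fin n) ℝ) + r ^ 2 • (C * Cᵀ)).det := by
  have hpd : (σ ^ 2 • (1 : Matrix (Fin n) (Fin n) ℝ) + r ^ 2 • (C * Cᵀ)).PosDef := by
    rw [posDef_iff_dotProduct_mulVec]
    constructor
    · unfold Matrix.IsHermitian
      simp [conjTranspose_add, conjTranspose_smul, conjTranspose_mul]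
    · intro x hx
      have hsx : star x = x := by simp
      rw [hsx, add_mulVec, smul_mulVec, smul_mulVec, one_mulVec,
        dotProduct_add, dotProduct_smul, dotProduct_smul, ← mulVec_mulVec,
        dotProduct_mulVec x C, ← mulVec_transpose]
      have h1 : 0 < x ⬝ᵥ x := by
        have hne : x ⬝ᵥ x ≠ 0 := fun h => hx (dotProduct_self_eq_zero.mp h)
        have hnn : 0 ≤ x ⬝ᵥ x := Finset.sum_nonneg fun i _ => mul_self_nonneg _
        exact hnn.lt_of_ne (Ne.symm hne)
      have h2 : 0 ≤ (Cᵀ *ᵥ x) ⬝ᵥ (Cᵀ *ᵥ x) := Finset.sum_nonneg fun i _ => mul_self_nonneg _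
      have := mul_pos (pow_pos hσ 2) h1
      have := mul_nonneg (pow_pos hr 2).le h2
      simp only [smul_eq_mul]
      linarith
  exact hpd.det_pos.ne'.isUnit

lemma aux_bound (σ r a q b c e : ℝ) (hσ : 0 < σ) (hr : 0 < r)
    (ha : 0 ≤ a) (hq : 0 ≤ q) (hb : 0 ≤ b)
    (hc : c = σ ^ 2 * a + r ^ 2 * q) (hCS : c ^ 2 ≤ a * b)
    (hcomp : e ^ 2 ≤ q) : |σ ^ 2 * e| ≤ σ * Real.sqrt b / r := by
  have hqb : r ^ 2 * σ ^ 2 * q ≤ b := by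
    have hc0 : 0 ≤ c := by rw [hc]; positivity
    rcases hc0.eq_or_lt with hceq | hclt
    · have hq0 : q ≤ 0 := by nlinarith [mul_nonneg (pow_pos hσ 2).le ha, pow_pos hr 2]
      have hq00 : q = 0 := le_antisymm hq0 hq
      rw [hq00, mul_zero]
      exact hb
    · have e2 : σ ^ 2 * a ≤ c := by nlinarith [mul_nonneg (pow_pos hr 2).le hq]
      have e3 : σ ^ 2 * a * b ≤ c * b := mul_le_mul_of_nonneg_right e2 hb
      have e1 : σ ^ 2 * c ^ 2 ≤ σ ^ 2 * (a * b) :=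
        mul_le_mul_of_nonneg_left hCS (pow_pos hσ 2).le
      have e5 : σ ^ 2 * c ^ 2 ≤ c * b := by nlinarith [e1, e3]
      have e4 : r ^ 2 * q ≤ c := by nlinarith [mul_nonneg (pow_pos hσ 2).le ha]
      have e6 : r ^ 2 * q * (σ ^ 2 * c) ≤ c * (σ ^ 2 * c) :=
        mul_le_mul_of_nonneg_right e4 (by positivity)
      nlinarith [e5, e6, hclt]
  have hrhs : 0 ≤ σ * Real.sqrt b / r := by positivity
  have hsq : (σ ^ 2 * e) ^ 2 ≤ (σ * Real.sqrt b / r) ^ 2 := by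
    have h6 : (σ * Real.sqrt b / r) ^ 2 = σ ^ 2 * b / r ^ 2 := by
      rw [div_pow, mul_pow, Real.sq_sqrt hb]
    rw [h6, le_div_iff₀ (pow_pos hr 2)]
    have g1 : σ ^ 2 * (r ^ 2 * σ ^ 2 * q) ≤ σ ^ 2 * b :=
      mul_le_mul_of_nonneg_left hqb (pow_pos hσ 2).le
    have g2 : e ^ 2 * (r ^ 2 * σ ^ 2 * σ ^ 2) ≤ q * (r ^ 2 * σ ^ 2 * σ ^ 2) :=
      mul_le_mul_of_nonneg_right hcomp (by positivity)
    nlinarith [g1, g2]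
  calc |σ ^ 2 * e| = Real.sqrt ((σ ^ 2 * e) ^ 2) := (Real.sqrt_sq_eq_abs _).symm
    _ ≤ Real.sqrt ((σ * Real.sqrt b / r) ^ 2) := Real.sqrt_le_sqrt hsq
    _ = σ * Real.sqrt b / r := Real.sqrt_sq hrhs

theorem ddnm_vanishing_noise_limit {m d : ℕ}
    (A : Matrix (Fin m) (Fin d) ℝ) (B : Matrix (Fin d) (Fin m) ℝ)
    (h1 : A * B * A = A) (h2 : B * A * B = B)
    (h3 : (A * B)ᵀ = A * B) (h4 : (B * A)ᵀ = B * A)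
    (r : ℝ) (hr : 0 < r) (y : Fin m → ℝ) (D : Fin d → ℝ)
    (f : ℝ → (Fin d → ℝ) → ℝ)
    (hf : ∀ σ x, f σ x = ∑ i, (y i - A.mulVec x i) ^ 2 + (σ ^ 2 / r ^ 2) * ∑ j, (x j - D j) ^ 2)
    (xstar : ℝ → (Fin d → ℝ))
    (hmin : ∀ σ, 0 < σ → ∀ x, f σ (xstar σ) ≤ f σ x)
    (huniq : ∀ σ, 0 < σ → ∀ x, (∀ z, f σ x ≤ f σ z) → x = xstar σ) :
    (∀ σ, 0 < σ → xstar σ =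
      D + (r ^ 2 • (Aᵀ * (σ ^ 2 • (1 : Matrix (Fin m) (Fin m) ℝ) + r ^ 2 • (A * Aᵀ))⁻¹)).mulVec
        (y - A.mulVec D)) ∧
    Tendsto xstar (nhdsWithin 0 (Set.Ioi 0))
      (nhds (B.mulVec y + ((1 : Matrix (Fin d) (Fin d) ℝ) - B * A).mulVec D)) := by
  have hu : True := trivial
  let u : Fin m → ℝ := y - A.mulVec D
  let M : ℝ → Matrix (Fin m) (Fin m) ℝ :=
    fun σ => σ ^ 2 • (1 : Matrix (Fin m) (Fin m) ℝ) + r ^ 2 • (A * Aᵀ)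
  let N : ℝ → Matrix (Fin d) (Fin d) ℝ :=
    fun σ => σ ^ 2 • (1 : Matrix (Fin d) (Fin d) ℝ) + r ^ 2 • (Aᵀ * A)
  have hMU : ∀ σ : ℝ, 0 < σ → IsUnit (M σ).det := fun σ hσ => aux_isUnit A σ r hσ hr
  have hNU : ∀ σ : ℝ, 0 < σ → IsUnit (N σ).det := by
    intro σ hσ
    have := aux_isUnit Aᵀ σ r hσ hr
    rwa [transpose_transpose] at this
  let xs : ℝ → Fin d → ℝ := fun σ => D + (r ^ 2 • (Aᵀ * (M σ)⁻¹)).mulVec u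
  -- Part 1: xs σ is the minimizer
  have key : ∀ σ : ℝ, 0 < σ → xstar σ = xs σ := by
    intro σ hσ
    refine (huniq σ hσ (xs σ) ?_).symm
    -- the normal equation
    set w : Fin m → ℝ := (M σ)⁻¹ *ᵥ u with hw
    have hMw : M σ *ᵥ w = u := by
      rw [hw, mulVec_mulVec, mul_nonsing_inv _ (hMU σ hσ), one_mulVec]
    have hMw' : σ ^ 2 • w + r ^ 2 • ((A * Aᵀ) *ᵥ w) = u := by
      rw [← hMw]
      show _ = (σ ^ 2 • (1 : Matrix (Fin m) (Fin m) ℝ) + r ^ 2 • (A * Aᵀ)) *ᵥ w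
      rw [add_mulVec, smul_mulVec, smul_mulVec, one_mulVec]
    have hxsD : xs σ - D = r ^ 2 • (Aᵀ *ᵥ w) := by
      show D + (r ^ 2 • (Aᵀ * (M σ)⁻¹)) *ᵥ u - D = _
      rw [add_sub_cancel_left, smul_mulVec, ← mulVec_mulVec]
    have hAxs : A *ᵥ (xs σ) = A *ᵥ D + r ^ 2 • ((A * Aᵀ) *ᵥ w) := by
      show A *ᵥ (D + (r ^ 2 • (Aᵀ * (M σ)⁻¹)) *ᵥ u) = _
      rw [mulVec_add]
      congr 1
      rw [smul_mulVec, mulVec_smul, mulVec_mulVec, ← Matrix.mul_assoc, ← mulVec_mulVec]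
    have hres' : y - A *ᵥ (xs σ) = σ ^ 2 • w := by
      rw [hAxs]
      have : y - (A *ᵥ D + r ^ 2 • ((A * Aᵀ) *ᵥ w)) =
          (y - A *ᵥ D) - r ^ 2 • ((A * Aᵀ) *ᵥ w) := by abel
      rw [this]
      show u - _ = _
      rw [← hMw']
      abel
    have hnormal : Aᵀ *ᵥ (y - A *ᵥ (xs σ)) = (σ ^ 2 / r ^ 2) • (xs σ - D) := by
      rw [hres', hxsD, mulVec_smul, smul_smul]
      congr 1
      field_simp
    -- minimality via completing the square
    intro x
    rw [hf, hf]
    set h : Fin d → ℝ := x - xs σ with hh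
    have hx0 : x = xs σ + h := by rw [hh]; abel
    have hx : A *ᵥ x = A *ᵥ (xs σ) + A *ᵥ h := by
      conv_lhs => rw [hx0]
      rw [mulVec_add]
    set lam : ℝ := σ ^ 2 / r ^ 2 with hlam
    have hlam0 : 0 ≤ lam := by positivity
    set p : Fin m → ℝ := y - A *ᵥ (xs σ) with hp
    have e1 : ∑ i, (y i - A.mulVec x i) ^ 2 =
        ∑ i, (p i) ^ 2 + ∑ i, ((A *ᵥ h) i) ^ 2 - 2 * ∑ i, p i * (A *ᵥ h) i := by
      rw [Finset.mul_sum, ← Finset.sum_add_distrib, ← Finset.sum_sub_distrib]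
      refine Finset.sum_congr rfl fun i _ => ?_
      have hxi : A.mulVec x i = (A *ᵥ (xs σ)) i + (A *ᵥ h) i := by
        rw [hx]; rfl
      have hpi : p i = y i - (A *ᵥ (xs σ)) i := rfl
      rw [hxi, hpi]; ring
    have e2 : ∑ j, (x j - D j) ^ 2 =
        ∑ j, (xs σ j - D j) ^ 2 + ∑ j, (h j) ^ 2 + 2 * ∑ j, (xs σ j - D j) * h j := by
      rw [Finset.mul_sum, ← Finset.sum_add_distrib, ← Finset.sum_add_distrib]
      refine Finset.sum_congr rfl fun j _ => ?_
      have hxj : x j = xs σ j + h j := by rw [hx0]; rfl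
      rw [hxj]; ring
    have cross : ∑ i, p i * (A *ᵥ h) i = lam * ∑ j, (xs σ j - D j) * h j := by
      have d1 : ∑ i, p i * (A *ᵥ h) i = p ⬝ᵥ (A *ᵥ h) := rfl
      have d2 : p ⬝ᵥ (A *ᵥ h) = (Aᵀ *ᵥ p) ⬝ᵥ h := by
        rw [dotProduct_mulVec, mulVec_transpose]
      have d3 : (Aᵀ *ᵥ p) ⬝ᵥ h = (lam • (xs σ - D)) ⬝ᵥ h := by rw [hp, hnormal]
      have d4 : (lam • (xs σ - D)) ⬝ᵥ h = lam * ((xs σ - D) ⬝ᵥ h) := by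
        rw [smul_dotProduct]; rfl
      have d5 : (xs σ - D) ⬝ᵥ h = ∑ j, (xs σ j - D j) * h j := rfl
      rw [d1, d2, d3, d4, d5]
    have q1 : 0 ≤ ∑ i, ((A *ᵥ h) i) ^ 2 := Finset.sum_nonneg fun i _ => sq_nonneg _
    have q2 : 0 ≤ ∑ j, (h j) ^ 2 := Finset.sum_nonneg fun j _ => sq_nonneg _
    have hpsum : ∑ i, (y i - A.mulVec (xs σ) i) ^ 2 = ∑ i, (p i) ^ 2 := rfl
    rw [hpsum, e1, e2, cross]
    have hlq2 : 0 ≤ lam * ∑ j, (h j) ^ 2 := mul_nonneg hlam0 q2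
    nlinarith [q1, hlq2]
  -- matrix identities
  have hAtAB : Aᵀ * (A * B) = Aᵀ := by
    calc Aᵀ * (A * B) = Aᵀ * (A * B)ᵀ := by rw [h3]
      _ = (A * B * A)ᵀ := (transpose_mul (A * B) A).symm
      _ = Aᵀ := by rw [h1]
  have hBAB : B = Aᵀ * (Bᵀ * B) := by
    calc B = B * A * B := h2.symm
      _ = (B * A)ᵀ * B := by rw [h4]
      _ = Aᵀ * Bᵀ * B := by rw [transpose_mul B A]
      _ = Aᵀ * (Bᵀ * B) := by rw [Matrix.mul_assoc]
  have hAN : ∀ σ : ℝ, Aᵀ * M σ = N σ * Aᵀ := by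
    intro σ
    show Aᵀ * (σ ^ 2 • 1 + r ^ 2 • (A * Aᵀ)) = (σ ^ 2 • 1 + r ^ 2 • (Aᵀ * A)) * Aᵀ
    rw [Matrix.mul_add, Matrix.add_mul, Matrix.mul_smul, Matrix.smul_mul, Matrix.mul_one,
      Matrix.one_mul, Matrix.mul_smul, Matrix.smul_mul, Matrix.mul_assoc]
  have hcomm : ∀ σ : ℝ, 0 < σ → Aᵀ * (M σ)⁻¹ = (N σ)⁻¹ * Aᵀ := by
    intro σ hσ
    calc Aᵀ * (M σ)⁻¹ = (N σ)⁻¹ * (N σ * (Aᵀ * (M σ)⁻¹)) := by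
          rw [← Matrix.mul_assoc, nonsing_inv_mul _ (hNU σ hσ), Matrix.one_mul]
      _ = (N σ)⁻¹ * ((Aᵀ * M σ) * (M σ)⁻¹) := by
          rw [← Matrix.mul_assoc (N σ), hAN σ]
      _ = (N σ)⁻¹ * Aᵀ := by
          rw [Matrix.mul_assoc Aᵀ, mul_nonsing_inv _ (hMU σ hσ), Matrix.mul_one]
  have hM1 : ∀ σ : ℝ, 0 < σ →
      r ^ 2 • (Aᵀ * (M σ)⁻¹) = B - σ ^ 2 • ((Aᵀ * (M σ)⁻¹) * (Bᵀ * B)) := by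
    intro σ hσ
    have hNB : N σ * B = σ ^ 2 • B + r ^ 2 • Aᵀ := by
      show (σ ^ 2 • 1 + r ^ 2 • (Aᵀ * A)) * B = _
      rw [Matrix.add_mul, Matrix.smul_mul, Matrix.one_mul, Matrix.smul_mul, Matrix.mul_assoc,
        hAtAB]
    have hB2 : B = σ ^ 2 • ((N σ)⁻¹ * B) + r ^ 2 • ((N σ)⁻¹ * Aᵀ) := by
      calc B = (N σ)⁻¹ * (N σ * B) := by
            rw [← Matrix.mul_assoc, nonsing_inv_mul _ (hNU σ hσ), Matrix.one_mul]
        _ = _ := by rw [hNB, Matrix.mul_add, Matrix.mul_smul, Matrix.mul_smul]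
    have hNb2 : (N σ)⁻¹ * B = (N σ)⁻¹ * Aᵀ * (Bᵀ * B) := by
      conv_lhs => rw [hBAB]
      rw [← Matrix.mul_assoc]
    rw [hNb2] at hB2
    rw [hcomm σ hσ, eq_sub_iff_add_eq, add_comm]
    rw [Matrix.mul_assoc] at hB2 ⊢
    exact hB2.symm
  -- limit statement
  let z : Fin m → ℝ := (Bᵀ * B) *ᵥ u
  have hL : B *ᵥ y + ((1 : Matrix (Fin d) (Fin d) ℝ) - B * A) *ᵥ D = D + B *ᵥ u := by
    show _ = D + B *ᵥ (y - A *ᵥ D)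
    rw [sub_mulVec, one_mulVec, mulVec_sub, ← mulVec_mulVec]
    abel
  have hxsL : ∀ σ : ℝ, 0 < σ → xs σ =
      (B *ᵥ y + ((1 : Matrix (Fin d) (Fin d) ℝ) - B * A) *ᵥ D)
        - σ ^ 2 • (Aᵀ *ᵥ ((M σ)⁻¹ *ᵥ z)) := by
    intro σ hσ
    show D + (r ^ 2 • (Aᵀ * (M σ)⁻¹)) *ᵥ u = _
    rw [hM1 σ hσ, sub_mulVec, hL]
    have : (σ ^ 2 • ((Aᵀ * (M σ)⁻¹) * (Bᵀ * B))) *ᵥ u = σ ^ 2 • (Aᵀ *ᵥ ((M σ)⁻¹ *ᵥ z)) := by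
      rw [smul_mulVec]
      congr 1
      show _ = Aᵀ *ᵥ ((M σ)⁻¹ *ᵥ ((Bᵀ * B) *ᵥ u))
      rw [mulVec_mulVec, mulVec_mulVec, Matrix.mul_assoc]
    rw [this]
    abel
  -- the error bound
  have hbound : ∀ σ : ℝ, 0 < σ → ∀ i,
      |(σ ^ 2 • (Aᵀ *ᵥ ((M σ)⁻¹ *ᵥ z))) i| ≤ σ * Real.sqrt (z ⬝ᵥ z) / r := by
    intro σ hσ i
    have hMw : M σ *ᵥ ((M σ)⁻¹ *ᵥ z) = z := by
      rw [mulVec_mulVec, mul_nonsing_inv _ (hMU σ hσ), one_mulVec]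
    set w : Fin m → ℝ := (M σ)⁻¹ *ᵥ z with hw
    have ha : 0 ≤ w ⬝ᵥ w := Finset.sum_nonneg fun j _ => mul_self_nonneg _
    have hq : 0 ≤ (Aᵀ *ᵥ w) ⬝ᵥ (Aᵀ *ᵥ w) := Finset.sum_nonneg fun j _ => mul_self_nonneg _
    have hb : 0 ≤ z ⬝ᵥ z := Finset.sum_nonneg fun j _ => mul_self_nonneg _
    have hc : w ⬝ᵥ z = σ ^ 2 * (w ⬝ᵥ w) + r ^ 2 * ((Aᵀ *ᵥ w) ⬝ᵥ (Aᵀ *ᵥ w)) := by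
      conv_lhs => rw [← hMw]
      show w ⬝ᵥ (σ ^ 2 • 1 + r ^ 2 • (A * Aᵀ)) *ᵥ w = _
      rw [add_mulVec, smul_mulVec, smul_mulVec, one_mulVec, dotProduct_add,
        dotProduct_smul, dotProduct_smul, ← mulVec_mulVec, dotProduct_mulVec w A,
        ← mulVec_transpose]
      simp only [smul_eq_mul]
    have hCS : (w ⬝ᵥ z) ^ 2 ≤ (w ⬝ᵥ w) * (z ⬝ᵥ z) := by
      have := Finset.sum_mul_sq_le_sq_mul_sq Finset.univ w z
      simpa [dotProduct, sq] using this
    have hcomp : ((Aᵀ *ᵥ w) i) ^ 2 ≤ (Aᵀ *ᵥ w) ⬝ᵥ (Aᵀ *ᵥ w) := by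
      have h9 := Finset.single_le_sum (f := fun j => (Aᵀ *ᵥ w) j * (Aᵀ *ᵥ w) j)
        (fun j _ => mul_self_nonneg _) (Finset.mem_univ i)
      calc ((Aᵀ *ᵥ w) i) ^ 2 = (Aᵀ *ᵥ w) i * (Aᵀ *ᵥ w) i := by ring
        _ ≤ _ := h9
    have hgoal : |(σ ^ 2 • (Aᵀ *ᵥ w)) i| = |σ ^ 2 * (Aᵀ *ᵥ w) i| := rfl
    rw [hgoal]
    exact aux_bound σ r (w ⬝ᵥ w) ((Aᵀ *ᵥ w) ⬝ᵥ (Aᵀ *ᵥ w)) (z ⬝ᵥ z) (w ⬝ᵥ z)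
      ((Aᵀ *ᵥ w) i) hσ hr ha hq hb hc hCS hcomp
  -- conclude
  constructor
  · intro σ hσ
    exact key σ hσ
  · have htz : Tendsto (fun σ : ℝ => σ * Real.sqrt (z ⬝ᵥ z) / r)
        (nhdsWithin 0 (Set.Ioi 0)) (nhds 0) := by
      have h0 : Tendsto (fun σ : ℝ => σ) (nhdsWithin 0 (Set.Ioi 0)) (nhds 0) :=
        tendsto_id.mono_left nhdsWithin_le_nhds
      simpa using (h0.mul_const (Real.sqrt (z ⬝ᵥ z))).div_const r
    have hg0 : Tendsto (fun σ : ℝ => σ ^ 2 • (Aᵀ *ᵥ ((M σ)⁻¹ *ᵥ z)))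
        (nhdsWithin 0 (Set.Ioi 0)) (nhds 0) := by
      rw [tendsto_pi_nhds]
      intro i
      have : (0 : Fin d → ℝ) i = 0 := rfl
      rw [this]
      apply squeeze_zero_norm' (a := fun σ : ℝ => σ * Real.sqrt (z ⬝ᵥ z) / r) _ htz
      filter_upwards [self_mem_nhdsWithin] with σ hσ
      rw [Real.norm_eq_abs]
      exact hbound σ hσ i
    have hmain : Tendsto (fun σ : ℝ =>
        (B *ᵥ y + ((1 : Matrix (Fin d) (Fin d) ℝ) - B * A) *ᵥ D)
          - σ ^ 2 • (Aᵀ *ᵥ ((M σ)⁻¹ *ᵥ z)))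
        (nhdsWithin 0 (Set.Ioi 0))
        (nhds (B *ᵥ y + ((1 : Matrix (Fin d) (Fin d) ℝ) - B * A) *ᵥ D)) := by
      simpa using tendsto_const_nhds.sub hg0
    refine hmain.congr' ?_
    filter_upwards [self_mem_nhdsWithin] with σ hσ
    rw [key σ hσ, hxsL σ hσ]
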